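/- arXiv:1805.09112 — 3 statements merged into one kernel-verified Lean document; each statement's English description precedes it below -/
import Mathlib

section
/- For fixed x ∈ ℝ^n and v ∈ ℝ^n, exp_x^c(v) converges to x + v as c → 0⁺, and for fixed distinct x, y, log_x^c(y) converges to y − x as c → 0⁺. -/
noncomputable section
open Real
open scoped RealInnerProductSpace
attribute [local instance] Classical.propDecidable

/-- Inverse hyperbolic tangent. -/
def artanh (x : ℝ) : ℝ := (1 / 2) * Real.log ((1 + x) / (1 - x))

/-- Inverse hyperbolic cosine. -/
def arcosh (x : ℝ) : ℝ := Real.log (x + Real.sqrt (x ^ 2 - 1))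

/-- Möbius addition on the ball `D_c^n`. -/
def mAdd {n : ℕ} (c : ℝ) (x y : EuclideanSpace ℝ (Fin n)) : EuclideanSpace ℝ (Fin n) :=
  (1 / (1 + 2 * c * ⟪x, y⟫ + c ^ 2 * ‖x‖ ^ 2 * ‖y‖ ^ 2)) •
    ((1 + 2 * c * ⟪x, y⟫ + c * ‖y‖ ^ 2) • x + (1 - c * ‖x‖ ^ 2) • y)

/-- Möbius scalar multiplication. -/
def mSmul {n : ℕ} (c r : ℝ) (x : EuclideanSpace ℝ (Fin n)) : EuclideanSpace ℝ (Fin n) :=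
  if x = 0 then 0 else
    ((1 / Real.sqrt c) * Real.tanh (r * _root_.artanh (Real.sqrt c * ‖x‖)) * ‖x‖⁻¹) • x

/-- Induced gyrovector distance. -/
def mDist {n : ℕ} (c : ℝ) (x y : EuclideanSpace ℝ (Fin n)) : ℝ :=
  (2 / Real.sqrt c) * _root_.artanh (Real.sqrt c * ‖mAdd c (-x) y‖)

/-- Conformal factor. -/
def lam {n : ℕ} (c : ℝ) (x : EuclideanSpace ℝ (Fin n)) : ℝ := 2 / (1 - c * ‖x‖ ^ 2)

/-- Exponential map at `x`. -/
def expMap {n : ℕ} (c : ℝ) (x v : EuclideanSpace ℝ (Fin n)) : EuclideanSpace ℝ (Fin n) :=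
  if v = 0 then x else
    mAdd c x ((Real.tanh (Real.sqrt c * lam c x * ‖v‖ / 2) / (Real.sqrt c * ‖v‖)) • v)

/-- Logarithmic map at `x`. -/
def logMap {n : ℕ} (c : ℝ) (x y : EuclideanSpace ℝ (Fin n)) : EuclideanSpace ℝ (Fin n) :=
  if mAdd c (-x) y = 0 then 0 else
    ((2 / (Real.sqrt c * lam c x)) * _root_.artanh (Real.sqrt c * ‖mAdd c (-x) y‖) *
      ‖mAdd c (-x) y‖⁻¹) • mAdd c (-x) y

/-- Exponential map at the origin. -/
def expZero {n : ℕ} (c : ℝ) (v : EuclideanSpace ℝ (Fin n)) : EuclideanSpace ℝ (Fin n) :=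
  if v = 0 then 0 else (Real.tanh (Real.sqrt c * ‖v‖) / (Real.sqrt c * ‖v‖)) • v

/-- Logarithmic map at the origin. -/
def logZero {n : ℕ} (c : ℝ) (y : EuclideanSpace ℝ (Fin n)) : EuclideanSpace ℝ (Fin n) :=
  if y = 0 then 0 else (_root_.artanh (Real.sqrt c * ‖y‖) / (Real.sqrt c * ‖y‖)) • y

/-- Möbius version of a linear map. -/
def mMap {n m : ℕ} (c : ℝ) (M : EuclideanSpace ℝ (Fin n) →ₗ[ℝ] EuclideanSpace ℝ (Fin m))
    (x : EuclideanSpace ℝ (Fin n)) : EuclideanSpace ℝ (Fin m) :=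
  if M x = 0 then 0 else
    ((1 / Real.sqrt c) * Real.tanh ((‖M x‖ / ‖x‖) * _root_.artanh (Real.sqrt c * ‖x‖)) *
      ‖M x‖⁻¹) • M x

lemma tendsto_tanh_div : Filter.Tendsto (fun t : ℝ => Real.tanh t / t) (nhdsWithin 0 {(0:ℝ)}ᶜ) (nhds 1) := by
  have h0 : HasDerivAt Real.tanh 1 0 := by
    have h : HasDerivAt (fun t : ℝ => Real.sinh t / Real.cosh t)
        ((Real.cosh 0 * Real.cosh 0 - Real.sinh 0 * Real.sinh 0) / Real.cosh 0 ^ 2) 0 :=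
      (Real.hasDerivAt_sinh 0).div (Real.hasDerivAt_cosh 0) (by positivity)
    have h2 : HasDerivAt Real.tanh ((Real.cosh 0 * Real.cosh 0 - Real.sinh 0 * Real.sinh 0) / Real.cosh 0 ^ 2) 0 := by
      refine h.congr_of_eventuallyEq (Filter.Eventually.of_forall fun t => ?_)
      rw [Real.tanh_eq_sinh_div_cosh]
    simpa using h2
  have := hasDerivAt_iff_tendsto_slope.mp h0
  refine this.congr' ?_
  filter_upwards [self_mem_nhdsWithin] with t ht
  simp [slope_def_field, Real.tanh_zero]

lemma hasDerivAt_artanh : HasDerivAt _root_.artanh 1 0 := by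
  have ha : HasDerivAt (fun t : ℝ => 1 + t) 1 0 := by
    simpa using (hasDerivAt_id (0:ℝ)).const_add 1
  have hb : HasDerivAt (fun t : ℝ => 1 - t) (-1) 0 := by
    simpa using (hasDerivAt_id (0:ℝ)).const_sub 1
  have h1 : HasDerivAt (fun t : ℝ => (1 + t) / (1 - t))
      ((1 * (1 - 0) - (1 + 0) * (-1)) / (1 - 0) ^ 2) 0 := ha.div hb (by norm_num)
  have h2 := (Real.hasDerivAt_log (x := (1 + 0) / (1 - 0)) (by norm_num)).comp 0 h1
  have h3 := h2.const_mul (1/2 : ℝ)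
  have h4 : HasDerivAt _root_.artanh ((1/2 : ℝ) * (((1 + 0) / (1 - 0) : ℝ)⁻¹ * ((1 * (1 - 0) - (1 + 0) * (-1)) / (1 - 0) ^ 2))) 0 := by
    refine h3.congr_of_eventuallyEq (Filter.Eventually.of_forall fun t => ?_)
    simp [_root_.artanh, Function.comp]
  norm_num at h4
  exact h4

lemma tendsto_artanh_div : Filter.Tendsto (fun t : ℝ => _root_.artanh t / t) (nhdsWithin 0 {(0:ℝ)}ᶜ) (nhds 1) := by
  have := hasDerivAt_iff_tendsto_slope.mp hasDerivAt_artanh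
  refine this.congr' ?_
  filter_upwards [self_mem_nhdsWithin] with t ht
  have : _root_.artanh 0 = 0 := by simp [_root_.artanh]
  simp [slope_def_field, this]

lemma tendsto_mAdd {n : ℕ} (a b : EuclideanSpace ℝ (Fin n)) {l : Filter ℝ} {w : ℝ → EuclideanSpace ℝ (Fin n)}
    (hl : Filter.Tendsto (fun c : ℝ => c) l (nhds 0)) (hw : Filter.Tendsto w l (nhds b)) :
    Filter.Tendsto (fun c => mAdd c a (w c)) l (nhds (a + b)) := by
  have hip : Filter.Tendsto (fun c => ⟪a, w c⟫) l (nhds ⟪a, b⟫) := tendsto_const_nhds.inner hw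
  have hn : Filter.Tendsto (fun c => ‖w c‖) l (nhds ‖b‖) := hw.norm
  have hd : Filter.Tendsto (fun c => 1 + 2 * c * ⟪a, w c⟫ + c ^ 2 * ‖a‖ ^ 2 * ‖w c‖ ^ 2) l
      (nhds (1 + 2 * 0 * ⟪a, b⟫ + 0 ^ 2 * ‖a‖ ^ 2 * ‖b‖ ^ 2)) := by
    exact (tendsto_const_nhds.add (((tendsto_const_nhds.mul hl)).mul hip)).add
      ((((hl.pow 2).mul_const _)).mul (hn.pow 2))
  have hs1 : Filter.Tendsto (fun c => 1 + 2 * c * ⟪a, w c⟫ + c * ‖w c‖ ^ 2) l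
      (nhds (1 + 2 * 0 * ⟪a, b⟫ + 0 * ‖b‖ ^ 2)) :=
    (tendsto_const_nhds.add ((tendsto_const_nhds.mul hl).mul hip)).add (hl.mul (hn.pow 2))
  have hs2 : Filter.Tendsto (fun c => 1 - c * ‖a‖ ^ 2) l (nhds (1 - 0 * ‖a‖ ^ 2)) :=
    tendsto_const_nhds.sub (hl.mul_const _)
  have hmain : Filter.Tendsto (fun c => mAdd c a (w c)) l
      (nhds ((1 / (1 + 2 * 0 * ⟪a, b⟫ + 0 ^ 2 * ‖a‖ ^ 2 * ‖b‖ ^ 2)) •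
        ((1 + 2 * 0 * ⟪a, b⟫ + 0 * ‖b‖ ^ 2) • a + (1 - 0 * ‖a‖ ^ 2) • b))) := by
    exact (tendsto_const_nhds.div hd (by norm_num)).smul ((hs1.smul tendsto_const_nhds).add (hs2.smul hw))
  convert hmain using 2
  simp

theorem expMap_logMap_tendsto {n : ℕ} (x v y : EuclideanSpace ℝ (Fin n)) (hxy : x ≠ y) :
    Filter.Tendsto (fun c : ℝ => expMap c x v) (nhdsWithin 0 (Set.Ioi 0)) (nhds (x + v)) ∧
    Filter.Tendsto (fun c : ℝ => logMap c x y) (nhdsWithin 0 (Set.Ioi 0)) (nhds (y - x)) := by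
  set L := nhdsWithin (0:ℝ) (Set.Ioi 0) with hL
  have hl : Filter.Tendsto (fun c : ℝ => c) L (nhds 0) :=
    Filter.tendsto_id.mono_left nhdsWithin_le_nhds
  have hsq : Filter.Tendsto Real.sqrt L (nhds 0) := by
    have := (Real.continuous_sqrt.tendsto 0).mono_left (nhdsWithin_le_nhds (s := Set.Ioi (0:ℝ)))
    simpa using this
  have hpos : ∀ᶠ c in L, (0:ℝ) < c := by
    filter_upwards [self_mem_nhdsWithin] with c hc using hc
  have hlam : Filter.Tendsto (fun c => lam c x) L (nhds 2) := by
    have h1 : Filter.Tendsto (fun c : ℝ => 1 - c * ‖x‖ ^ 2) L (nhds 1) := by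
      simpa using tendsto_const_nhds.sub (hl.mul_const (‖x‖ ^ 2))
    have := tendsto_const_nhds.div h1 one_ne_zero (f := fun _ : ℝ => (2:ℝ))
    simpa [lam, Pi.div_def] using this
  have hlampos : ∀ᶠ c in L, 0 < lam c x :=
    hlam.eventually (eventually_gt_nhds (by norm_num))
  constructor
  · -- expMap
    by_cases hv : v = 0
    · subst hv
      simp only [expMap, if_pos rfl, add_zero]
      exact (tendsto_const_nhds : Filter.Tendsto (fun _ : ℝ => x) L _)
    · have hvn : (0:ℝ) < ‖v‖ := norm_pos_iff.mpr hv
      have hT : Filter.Tendsto (fun c => Real.sqrt c * lam c x * ‖v‖ / 2) L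
          (nhdsWithin 0 {(0:ℝ)}ᶜ) := by
        rw [tendsto_nhdsWithin_iff]
        constructor
        · simpa using ((hsq.mul hlam).mul_const ‖v‖).div_const 2
        · filter_upwards [hpos, hlampos] with c hc hlc
          have : 0 < Real.sqrt c * lam c x * ‖v‖ / 2 := by positivity
          exact (ne_of_gt this)
      have hs : Filter.Tendsto
          (fun c => Real.tanh (Real.sqrt c * lam c x * ‖v‖ / 2) / (Real.sqrt c * ‖v‖)) L
          (nhds 1) := by
        have h1 := (tendsto_tanh_div.comp hT).mul (hlam.div_const 2)
        have h2 : (1 : ℝ) * (2 / 2) = 1 := by norm_num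
        rw [h2] at h1
        refine h1.congr' ?_
        filter_upwards [hpos, hlampos] with c hc hlc
        have hsc : 0 < Real.sqrt c := Real.sqrt_pos.mpr hc
        simp only [Function.comp]
        field_simp
      have hw : Filter.Tendsto
          (fun c => (Real.tanh (Real.sqrt c * lam c x * ‖v‖ / 2) / (Real.sqrt c * ‖v‖)) • v) L
          (nhds v) := by
        simpa using hs.smul_const v
      have := tendsto_mAdd x v hl hw
      refine this.congr fun c => ?_
      rw [expMap, if_neg hv]
  · -- logMap
    have hyx : y - x ≠ 0 := sub_ne_zero.mpr (Ne.symm hxy)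
    have hw : Filter.Tendsto (fun c => mAdd c (-x) y) L (nhds (y - x)) := by
      have := tendsto_mAdd (-x) y hl (tendsto_const_nhds : Filter.Tendsto (fun _ : ℝ => y) L _)
      simpa [neg_add_eq_sub] using this
    have hwn : Filter.Tendsto (fun c => ‖mAdd c (-x) y‖) L (nhds ‖y - x‖) := hw.norm
    have hwpos : ∀ᶠ c in L, 0 < ‖mAdd c (-x) y‖ :=
      hwn.eventually (eventually_gt_nhds (norm_pos_iff.mpr hyx))
    have hU : Filter.Tendsto (fun c => Real.sqrt c * ‖mAdd c (-x) y‖) L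
        (nhdsWithin 0 {(0:ℝ)}ᶜ) := by
      rw [tendsto_nhdsWithin_iff]
      constructor
      · simpa using hsq.mul hwn
      · filter_upwards [hpos, hwpos] with c hc hwc
        have hsc : 0 < Real.sqrt c := Real.sqrt_pos.mpr hc
        exact ne_of_gt (by positivity)
    have hK : Filter.Tendsto
        (fun c => (2 / (Real.sqrt c * lam c x)) * _root_.artanh (Real.sqrt c * ‖mAdd c (-x) y‖) *
          ‖mAdd c (-x) y‖⁻¹) L (nhds 1) := by
      have h1 := (tendsto_artanh_div.comp hU).mul
        (tendsto_const_nhds.div hlam (two_ne_zero) (f := fun _ : ℝ => (2:ℝ)))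
      have h2 : (1 : ℝ) * (2 / 2) = 1 := by norm_num
      rw [h2] at h1
      refine h1.congr' ?_
      filter_upwards [hpos, hlampos, hwpos] with c hc hlc hwc
      have hsc : 0 < Real.sqrt c := Real.sqrt_pos.mpr hc
      simp only [Function.comp, Pi.div_apply]
      field_simp
    have hfin : Filter.Tendsto
        (fun c => ((2 / (Real.sqrt c * lam c x)) * _root_.artanh (Real.sqrt c * ‖mAdd c (-x) y‖) *
          ‖mAdd c (-x) y‖⁻¹) • mAdd c (-x) y) L (nhds (y - x)) := by
      simpa using hK.smul hw
    refine Filter.Tendsto.congr' ?_ hfin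
    filter_upwards [hwpos] with c hwc
    rw [logMap, if_neg (norm_pos_iff.mp hwc)]
end
end

section
/- For c > 0, x ∈ D_c^n, and v ∈ ℝ^n, the parallel transport from the origin to x, expressed via gyrovector operations, admits the closed form log_x^c(x ⊕_c exp_0^c(v)) = (λ_0^c/λ_x^c) v = (1 − c‖x‖²) v. -/
noncomputable section
open Real
open scoped RealInnerProductSpace
attribute [local instance] Classical.propDecidable

lemma my_tanh_lt_one (t : ℝ) : Real.tanh t < 1 := by
  rw [Real.tanh_eq_sinh_div_cosh, div_lt_one (Real.cosh_pos t)]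
  nlinarith [Real.cosh_sub_sinh t, Real.exp_pos (-t)]

lemma my_tanh_pos {t : ℝ} (ht : 0 < t) : 0 < Real.tanh t := by
  rw [Real.tanh_eq_sinh_div_cosh]
  exact div_pos (Real.sinh_pos_iff.mpr ht) (Real.cosh_pos t)

lemma my_artanh_tanh (t : ℝ) : _root_.artanh (Real.tanh t) = t := by
  have hc := Real.cosh_pos t
  have h1 : 1 + Real.tanh t = Real.exp t / Real.cosh t := by
    rw [Real.tanh_eq_sinh_div_cosh, ← Real.cosh_add_sinh]; field_simp
  have h2 : 1 - Real.tanh t = Real.exp (-t) / Real.cosh t := by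
    rw [Real.tanh_eq_sinh_div_cosh, ← Real.cosh_sub_sinh]; field_simp
  have h3 : Real.exp t / Real.cosh t / (Real.exp (-t) / Real.cosh t)
      = Real.exp (t - -t) := by
    rw [Real.exp_sub]; field_simp
  rw [_root_.artanh, h1, h2, h3, Real.log_exp]; ring

set_option maxHeartbeats 2000000 in
lemma mAdd_cancel {n : ℕ} (c : ℝ) (hc : 0 < c) (x y : EuclideanSpace ℝ (Fin n))
    (hx : c * ‖x‖ ^ 2 < 1) (hy : c * ‖y‖ ^ 2 < 1) :
    mAdd c (-x) (mAdd c x y) = y := by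
  have ha2 : ⟪x, y⟫ ^ 2 ≤ ‖x‖ ^ 2 * ‖y‖ ^ 2 := by
    have h := abs_real_inner_le_norm x y
    nlinarith [abs_nonneg ⟪x, y⟫, sq_abs ⟪x, y⟫, norm_nonneg x, norm_nonneg y]
  have hXn : (0:ℝ) ≤ c * ‖x‖ ^ 2 := by positivity
  have hYn : (0:ℝ) ≤ c * ‖y‖ ^ 2 := by positivity
  have hprod : c ^ 2 * ‖x‖ ^ 2 * ‖y‖ ^ 2 < 1 := by nlinarith
  have h1 : 0 < 1 + c * ⟪x, y⟫ := by
    nlinarith [ha2, hprod, mul_le_mul_of_nonneg_left ha2 (sq_nonneg c)]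
  have hDpos : 0 < 1 + 2 * c * ⟪x, y⟫ + c ^ 2 * ‖x‖ ^ 2 * ‖y‖ ^ 2 := by
    nlinarith [mul_pos h1 h1, mul_le_mul_of_nonneg_left ha2 (sq_nonneg c)]
  have hD : (1 + 2 * c * ⟪x, y⟫ + c ^ 2 * ‖x‖ ^ 2 * ‖y‖ ^ 2) ≠ 0 := hDpos.ne'
  have hq : (1 - c * ‖x‖ ^ 2) ≠ 0 := by nlinarith
  have hzdef : mAdd c x y = (1 / (1 + 2 * c * ⟪x, y⟫ + c ^ 2 * ‖x‖ ^ 2 * ‖y‖ ^ 2)) •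
      ((1 + 2 * c * ⟪x, y⟫ + c * ‖y‖ ^ 2) • x + (1 - c * ‖x‖ ^ 2) • y) := rfl
  have hin : ⟪-x, mAdd c x y⟫ = (1 / (1 + 2 * c * ⟪x, y⟫ + c ^ 2 * ‖x‖ ^ 2 * ‖y‖ ^ 2)) *
      (-((1 + 2 * c * ⟪x, y⟫ + c * ‖y‖ ^ 2) * ‖x‖ ^ 2) - (1 - c * ‖x‖ ^ 2) * ⟪x, y⟫) := by
    rw [hzdef]
    simp only [inner_add_right, real_inner_smul_right, inner_neg_left,
      real_inner_self_eq_norm_sq]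
    ring
  have hnorm : ‖mAdd c x y‖ ^ 2 = (1 / (1 + 2 * c * ⟪x, y⟫ + c ^ 2 * ‖x‖ ^ 2 * ‖y‖ ^ 2)) ^ 2 *
      ((1 + 2 * c * ⟪x, y⟫ + c * ‖y‖ ^ 2) ^ 2 * ‖x‖ ^ 2 +
        2 * (1 + 2 * c * ⟪x, y⟫ + c * ‖y‖ ^ 2) * (1 - c * ‖x‖ ^ 2) * ⟪x, y⟫ +
        (1 - c * ‖x‖ ^ 2) ^ 2 * ‖y‖ ^ 2) := by
    rw [hzdef, ← real_inner_self_eq_norm_sq]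
    simp only [inner_add_left, inner_add_right, real_inner_smul_left, real_inner_smul_right]
    simp only [real_inner_self_eq_norm_sq, real_inner_comm y x]
    ring
  conv_lhs => rw [mAdd]
  rw [norm_neg, hin, hnorm, hzdef]
  clear hzdef hin hnorm ha2 hXn hYn hprod h1 hDpos hx hy
  revert hD hq
  generalize ⟪x, y⟫ = a
  generalize (‖x‖ : ℝ) ^ 2 = X
  generalize (‖y‖ : ℝ) ^ 2 = Y
  intro hD hq
  have hED : (1 + 2 * c * (1 / (1 + 2 * c * a + c ^ 2 * X * Y) *
        (-((1 + 2 * c * a + c * Y) * X) - (1 - c * X) * a)) +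
      c ^ 2 * X * ((1 / (1 + 2 * c * a + c ^ 2 * X * Y)) ^ 2 *
        ((1 + 2 * c * a + c * Y) ^ 2 * X + 2 * (1 + 2 * c * a + c * Y) * (1 - c * X) * a +
          (1 - c * X) ^ 2 * Y))) * (1 + 2 * c * a + c ^ 2 * X * Y) ^ 2 =
      (1 - c * X) ^ 2 * (1 + 2 * c * a + c ^ 2 * X * Y) := by
    field_simp
    ring
  have hE : (1 + 2 * c * (1 / (1 + 2 * c * a + c ^ 2 * X * Y) *
        (-((1 + 2 * c * a + c * Y) * X) - (1 - c * X) * a)) +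
      c ^ 2 * X * ((1 / (1 + 2 * c * a + c ^ 2 * X * Y)) ^ 2 *
        ((1 + 2 * c * a + c * Y) ^ 2 * X + 2 * (1 + 2 * c * a + c * Y) * (1 - c * X) * a +
          (1 - c * X) ^ 2 * Y))) ≠ 0 := by
    intro h
    rw [h, zero_mul] at hED
    exact (mul_ne_zero (mul_ne_zero hq hq) hD)
      (by linarith [hED] : (1 - c * X) * (1 - c * X) * (1 + 2 * c * a + c ^ 2 * X * Y) = 0)
  apply smul_right_injective (EuclideanSpace ℝ (Fin n)) hE
  dsimp only
  rw [smul_smul, mul_one_div, div_self hE, one_smul]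
  match_scalars
  · field_simp
    ring
  · field_simp
    have hD' : 1 + c * 2 * a + c ^ 2 * X * Y ≠ 0 := by convert hD using 2; ring
    field_simp
    ring

theorem parallel_transport_zero {n : ℕ} (c : ℝ) (hc : 0 < c)
    (x : EuclideanSpace ℝ (Fin n)) (hx : c * ‖x‖ ^ 2 < 1) (v : EuclideanSpace ℝ (Fin n)) :
    logMap c x (mAdd c x (expZero c v)) = (lam c (0 : EuclideanSpace ℝ (Fin n)) / lam c x) • v ∧
    logMap c x (mAdd c x (expZero c v)) = (1 - c * ‖x‖ ^ 2) • v := by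
  have hq : (0:ℝ) < 1 - c * ‖x‖ ^ 2 := by linarith
  have hsc : (0:ℝ) < Real.sqrt c := Real.sqrt_pos.mpr hc
  have hlamx : lam c x = 2 / (1 - c * ‖x‖ ^ 2) := rfl
  have hlamne : lam c x ≠ 0 := by
    rw [hlamx]; positivity
  have key : logMap c x (mAdd c x (expZero c v)) = (1 - c * ‖x‖ ^ 2) • v := by
    by_cases hv : v = 0
    · subst hv
      have h0 : expZero c (0 : EuclideanSpace ℝ (Fin n)) = 0 := by simp [expZero]
      have hx0 : mAdd c x (0 : EuclideanSpace ℝ (Fin n)) = x := by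
        simp only [mAdd, inner_zero_right, norm_zero, mul_zero, add_zero, zero_pow,
          smul_zero, zero_mul, ne_eq, OfNat.ofNat_ne_zero, not_false_eq_true]
        norm_num
      have hxx : mAdd c (-x) x = 0 := by
        have h := mAdd_cancel c hc x 0 hx (by simp)
        rwa [hx0] at h
      rw [h0, hx0, logMap, if_pos hxx, smul_zero]
    · set s := Real.sqrt c * ‖v‖ with hs
      have hvn : (0:ℝ) < ‖v‖ := norm_pos_iff.mpr hv
      have hspos : 0 < s := by positivity
      have htpos : 0 < Real.tanh s := my_tanh_pos hspos
      have hy : expZero c v = (Real.tanh s / s) • v := by rw [expZero, if_neg hv]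
      have hny : ‖expZero c v‖ = Real.tanh s / Real.sqrt c := by
        rw [hy, norm_smul, Real.norm_eq_abs,
          abs_of_pos (div_pos htpos hspos), hs]
        field_simp
      have hyne : expZero c v ≠ 0 := by
        rw [hy]
        exact smul_ne_zero (ne_of_gt (div_pos htpos hspos)) hv
      have hcy : c * ‖expZero c v‖ ^ 2 < 1 := by
        rw [hny, div_pow, Real.sq_sqrt hc.le]
        have h1 := my_tanh_lt_one s
        rw [mul_div_cancel₀ _ hc.ne']
        nlinarith
      have hcancel := mAdd_cancel c hc x (expZero c v) hx hcy
      rw [logMap, hcancel, if_neg hyne, hny]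
      have h2 : Real.sqrt c * (Real.tanh s / Real.sqrt c) = Real.tanh s := by
        field_simp
      rw [h2, my_artanh_tanh, hy, smul_smul]
      congr 1
      rw [hlamx, hs]
      have htne : Real.tanh (Real.sqrt c * ‖v‖) ≠ 0 := htpos.ne'
      field_simp
  refine ⟨?_, key⟩
  rw [key]
  congr 1
  have hl0 : lam c (0 : EuclideanSpace ℝ (Fin n)) = 2 := by
    simp [lam]
  rw [hl0, hlamx]
  field_simp
end
end

section
/- For c > 0, x ∈ D_c^n, p ∈ D_c^n, a ∈ ℝ^n \ {0}, the distance from x to the Poincaré hyperplane H = {w ∈ D_c^n : ⟨(−p) ⊕_c w, a⟩ = 0} equals (1/√c) sinh⁻¹( 2√c |⟨(−p) ⊕_c x, a⟩| / ((1 − c‖(−p) ⊕_c x‖²) ‖a‖) ), where distance is d_c(x,w) = (2/√c) tanh⁻¹(√c‖(−x) ⊕_c w‖). -/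
noncomputable section
open Real
open scoped RealInnerProductSpace
attribute [local instance] Classical.propDecidable

section Aux
variable {n : ℕ}
local notation "E" => EuclideanSpace ℝ (Fin n)

lemma sinh_two_artanh {r : ℝ} (h0 : 0 ≤ r) (h1 : r < 1) :
    Real.sinh (2 * _root_.artanh r) = 2 * r / (1 - r ^ 2) := by
  have h2 : (0:ℝ) < 1 + r := by linarith
  have h3 : (0:ℝ) < 1 - r := by linarith
  have hA : (0:ℝ) < (1 + r) / (1 - r) := by positivity
  have h4 : (1:ℝ) - r ^ 2 ≠ 0 := by nlinarith
  rw [_root_.artanh, show 2 * ((1/2) * Real.log ((1+r)/(1-r))) = Real.log ((1+r)/(1-r)) by ring,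
    Real.sinh_eq, Real.exp_log hA, ← Real.log_inv, Real.exp_log (by positivity)]
  field_simp
  ring

lemma artanh_nonneg {r : ℝ} (h0 : 0 ≤ r) (h1 : r < 1) : 0 ≤ _root_.artanh r := by
  have h3 : (0:ℝ) < 1 - r := by linarith
  have : (1:ℝ) ≤ (1 + r) / (1 - r) := by rw [le_div_iff₀ h3]; linarith
  have := Real.log_nonneg this
  rw [_root_.artanh]; linarith

lemma normsq_combo2 (α β : ℝ) (x y : E) :
    ‖α • x + β • y‖ ^ 2 = α^2 * ‖x‖^2 + 2*α*β*⟪x,y⟫ + β^2 * ‖y‖^2 := by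
  simp only [← real_inner_self_eq_norm_sq, inner_add_left, inner_add_right,
    real_inner_smul_left, real_inner_smul_right]
  rw [real_inner_comm y x]; ring

lemma D_pos {c : ℝ} (hc : 0 < c) {x y : E} (hx : c * ‖x‖^2 < 1) (hy : c * ‖y‖^2 < 1) :
    0 < 1 + 2 * c * ⟪x, y⟫ + c ^ 2 * ‖x‖ ^ 2 * ‖y‖ ^ 2 := by
  have hcs := abs_real_inner_le_norm x y
  have h0x := norm_nonneg x
  have h0y := norm_nonneg y
  have h1 : c * ‖x‖ * ‖y‖ < 1 := by
    nlinarith [mul_pos (sub_pos.2 hx) (sub_pos.2 hy),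
      mul_nonneg (mul_nonneg hc.le h0x) h0y, sq_nonneg (‖x‖ - ‖y‖)]
  nlinarith [(abs_le.mp hcs).1, sq_nonneg (1 - c * ‖x‖ * ‖y‖),
    mul_nonneg (mul_nonneg hc.le h0x) h0y]

lemma normsq_mAdd {c : ℝ} {x y : E}
    (hD : 1 + 2 * c * ⟪x, y⟫ + c ^ 2 * ‖x‖ ^ 2 * ‖y‖ ^ 2 ≠ 0) :
    ‖mAdd c x y‖ ^ 2 = ‖x + y‖ ^ 2 / (1 + 2 * c * ⟪x, y⟫ + c ^ 2 * ‖x‖ ^ 2 * ‖y‖ ^ 2) := by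
  have key : ∀ s X Y : ℝ, 1 + 2*c*s + c^2*X*Y ≠ 0 →
      (1/(1 + 2*c*s + c^2*X*Y))^2 *
        ((1 + 2*c*s + c*Y)^2 * X + 2*(1 + 2*c*s + c*Y)*(1 - c*X)*s + (1 - c*X)^2*Y)
      = (X + 2*s + Y)/(1 + 2*c*s + c^2*X*Y) := by
    intro s X Y h
    field_simp
    ring
  rw [mAdd, norm_smul, mul_pow, normsq_combo2, norm_add_sq_real, Real.norm_eq_abs, sq_abs]
  exact key ⟪x,y⟫ (‖x‖^2) (‖y‖^2) hD

lemma one_sub_normsq_mAdd {c : ℝ} {x y : E}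
    (hD : 1 + 2 * c * ⟪x, y⟫ + c ^ 2 * ‖x‖ ^ 2 * ‖y‖ ^ 2 ≠ 0) :
    1 - c * ‖mAdd c x y‖ ^ 2 =
      (1 - c * ‖x‖ ^ 2) * (1 - c * ‖y‖ ^ 2) /
        (1 + 2 * c * ⟪x, y⟫ + c ^ 2 * ‖x‖ ^ 2 * ‖y‖ ^ 2) := by
  have key : ∀ s X Y : ℝ, 1 + 2*c*s + c^2*X*Y ≠ 0 →
      1 - c * ((X + 2*s + Y)/(1 + 2*c*s + c^2*X*Y))
      = (1 - c*X)*(1 - c*Y)/(1 + 2*c*s + c^2*X*Y) := by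
    intro s X Y h
    generalize hD0 : 1 + 2*c*s + c^2*X*Y = D at *
    field_simp
    subst hD0
    ring
  rw [normsq_mAdd hD, norm_add_sq_real]
  exact key ⟪x,y⟫ (‖x‖^2) (‖y‖^2) hD

lemma mAdd_mem_ball {c : ℝ} (hc : 0 < c) {x y : E}
    (hx : c * ‖x‖^2 < 1) (hy : c * ‖y‖^2 < 1) : c * ‖mAdd c x y‖ ^ 2 < 1 := by
  have hD := D_pos hc hx hy
  have h := one_sub_normsq_mAdd (x := x) (y := y) (c := c) hD.ne'
  have : 0 < (1 - c * ‖x‖ ^ 2) * (1 - c * ‖y‖ ^ 2) /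
      (1 + 2 * c * ⟪x, y⟫ + c ^ 2 * ‖x‖ ^ 2 * ‖y‖ ^ 2) :=
    div_pos (mul_pos (by linarith) (by linarith)) hD
  linarith

end Aux

section Aux2
variable {n : ℕ}
local notation "E" => EuclideanSpace ℝ (Fin n)

set_option maxHeartbeats 1000000

lemma mAdd_combo (c : ℝ) {x y : E} (hD : 1 + 2*c*⟪x,y⟫ + c^2*‖x‖^2*‖y‖^2 ≠ 0) :
    mAdd c x y = ((1 + 2*c*⟪x,y⟫ + c*‖y‖^2)/(1 + 2*c*⟪x,y⟫ + c^2*‖x‖^2*‖y‖^2)) • x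
      + ((1 - c*‖x‖^2)/(1 + 2*c*⟪x,y⟫ + c^2*‖x‖^2*‖y‖^2)) • y := by
  rw [mAdd]
  match_scalars <;>
  · revert hD
    generalize ⟪x,y⟫ = s
    generalize ‖x‖^2 = X
    generalize ‖y‖^2 = Y
    intro hD
    field_simp

lemma inner_mAdd {c : ℝ} {p u v : E}
    (hD1 : 1 + 2*c*⟪p,u⟫ + c^2*‖p‖^2*‖u‖^2 ≠ 0)
    (hD2 : 1 + 2*c*⟪p,v⟫ + c^2*‖p‖^2*‖v‖^2 ≠ 0) :
    ⟪mAdd c p u, mAdd c p v⟫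
      = ((1 + 2*c*⟪p,u⟫ + c*‖u‖^2)*(1 + 2*c*⟪p,v⟫ + c*‖v‖^2)*‖p‖^2
        + (1 + 2*c*⟪p,u⟫ + c*‖u‖^2)*(1 - c*‖p‖^2)*⟪p,v⟫
        + (1 - c*‖p‖^2)*(1 + 2*c*⟪p,v⟫ + c*‖v‖^2)*⟪p,u⟫
        + (1 - c*‖p‖^2)^2*⟪u,v⟫)
        /((1 + 2*c*⟪p,u⟫ + c^2*‖p‖^2*‖u‖^2)*(1 + 2*c*⟪p,v⟫ + c^2*‖p‖^2*‖v‖^2)) := by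
  rw [mAdd_combo c hD1, mAdd_combo c hD2]
  simp only [inner_add_left, inner_add_right, real_inner_smul_left, real_inner_smul_right,
    real_inner_self_eq_norm_sq]
  rw [real_inner_comm u p]
  revert hD1 hD2
  generalize ⟪p,u⟫ = s1
  generalize ⟪p,v⟫ = s2
  generalize ⟪u,v⟫ = s3
  generalize ‖p‖^2 = P
  generalize ‖u‖^2 = U
  generalize ‖v‖^2 = V
  intro hD1 hD2
  field_simp
  ring

lemma normsq_sub_mAdd {c : ℝ} {p u v : E}
    (hD1 : 1 + 2*c*⟪p,u⟫ + c^2*‖p‖^2*‖u‖^2 ≠ 0)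
    (hD2 : 1 + 2*c*⟪p,v⟫ + c^2*‖p‖^2*‖v‖^2 ≠ 0) :
    ‖mAdd c p u - mAdd c p v‖^2 * ((1 + 2*c*⟪p,u⟫ + c^2*‖p‖^2*‖u‖^2)
        * (1 + 2*c*⟪p,v⟫ + c^2*‖p‖^2*‖v‖^2))
      = (1 - c*‖p‖^2)^2 * ‖u - v‖^2 := by
  rw [norm_sub_sq_real, inner_mAdd hD1 hD2, normsq_mAdd hD1, normsq_mAdd hD2,
    norm_add_sq_real, norm_add_sq_real, norm_sub_sq_real]
  revert hD1 hD2
  generalize ⟪p,u⟫ = s1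
  generalize ⟪p,v⟫ = s2
  generalize ⟪u,v⟫ = s3
  generalize ‖p‖^2 = P
  generalize ‖u‖^2 = U
  generalize ‖v‖^2 = V
  intro hD1 hD2
  generalize hE1 : 1 + 2*c*s1 + c^2*P*U = D1 at *
  generalize hE2 : 1 + 2*c*s2 + c^2*P*V = D2 at *
  field_simp
  subst hE1 hE2
  ring

lemma mAdd_neg_cancel {c : ℝ} (hc : 0 < c) {p w : E}
    (hp : c * ‖p‖^2 < 1) (hw : c * ‖w‖^2 < 1) :
    mAdd c (-p) (mAdd c p w) = w := by
  have hD1 := D_pos hc hp hw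
  have hzi : ⟪p, mAdd c p w⟫ = ((1 + 2*c*⟪p,w⟫ + c*‖w‖^2)*‖p‖^2 + (1 - c*‖p‖^2)*⟪p,w⟫)
      /(1 + 2*c*⟪p,w⟫ + c^2*‖p‖^2*‖w‖^2) := by
    rw [mAdd_combo c hD1.ne', inner_add_right, real_inner_smul_right, real_inner_smul_right,
      real_inner_self_eq_norm_sq]
    ring
  have hzn : ‖mAdd c p w‖^2 = ((1 + 2*c*⟪p,w⟫ + c*‖w‖^2)^2*‖p‖^2
      + 2*(1 + 2*c*⟪p,w⟫ + c*‖w‖^2)*(1 - c*‖p‖^2)*⟪p,w⟫ + (1 - c*‖p‖^2)^2*‖w‖^2)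
      /(1 + 2*c*⟪p,w⟫ + c^2*‖p‖^2*‖w‖^2)^2 := by
    rw [mAdd_combo c hD1.ne', normsq_combo2]
    revert hD1
    generalize ⟪p,w⟫ = s
    generalize ‖p‖^2 = P
    generalize ‖w‖^2 = W
    intro hD1
    field_simp
  have ha2 : 1 + 2*c*⟪-p, mAdd c p w⟫ + c*‖mAdd c p w‖^2
      = (1 - c*‖p‖^2)*(1 + 2*c*⟪p,w⟫ + c*‖w‖^2)/(1 + 2*c*⟪p,w⟫ + c^2*‖p‖^2*‖w‖^2) := by
    rw [inner_neg_left, hzi, hzn]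
    revert hD1
    generalize ⟪p,w⟫ = s
    generalize ‖p‖^2 = P
    generalize ‖w‖^2 = W
    intro hD1
    generalize hE1 : 1 + 2*c*s + c^2*P*W = D1 at *
    field_simp
    subst hE1
    ring
  have hd2 : 1 + 2*c*⟪-p, mAdd c p w⟫ + c^2*‖p‖^2*‖mAdd c p w‖^2
      = (1 - c*‖p‖^2)^2/(1 + 2*c*⟪p,w⟫ + c^2*‖p‖^2*‖w‖^2) := by
    rw [inner_neg_left, hzi, hzn]
    revert hD1
    generalize ⟪p,w⟫ = s
    generalize ‖p‖^2 = P
    generalize ‖w‖^2 = W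
    intro hD1
    generalize hE1 : 1 + 2*c*s + c^2*P*W = D1 at *
    field_simp
    subst hE1
    ring
  have hLp : (0:ℝ) < 1 - c*‖p‖^2 := by linarith
  rw [mAdd, norm_neg, hd2, ha2, mAdd_combo c hD1.ne']
  match_scalars <;>
  · revert hD1 hLp
    generalize ⟪p,w⟫ = s
    generalize ‖p‖^2 = P
    generalize ‖w‖^2 = W
    intro hD1 hLp
    generalize hE1 : 1 + 2*c*s + c^2*P*W = D1 at *
    have hD1' := hD1.ne'
    field_simp
    all_goals subst hE1
    try ring
end Aux2

section Aux3
variable {n : ℕ}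
local notation "E" => EuclideanSpace ℝ (Fin n)

set_option maxHeartbeats 1000000

lemma mAdd_cancel_s17 {c : ℝ} (hc : 0 < c) {p w : E}
    (hp : c * ‖p‖^2 < 1) (hw : c * ‖w‖^2 < 1) :
    mAdd c p (mAdd c (-p) w) = w := by
  have h := mAdd_neg_cancel (c := c) hc (p := -p) (by rwa [norm_neg]) hw
  rwa [neg_neg] at h

lemma Q_pos {c : ℝ} (hc : 0 < c) {x w : E} (hx : c * ‖x‖^2 < 1) (hw : c * ‖w‖^2 < 1) :
    0 < 1 - 2*c*⟪x,w⟫ + c^2*‖x‖^2*‖w‖^2 := by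
  have h := D_pos hc (x := -x) (y := w) (by rwa [norm_neg]) hw
  rw [inner_neg_left, norm_neg] at h
  linarith [h]

lemma normsq_mAdd_neg {c : ℝ} {x w : E}
    (hQ : 1 - 2*c*⟪x,w⟫ + c^2*‖x‖^2*‖w‖^2 ≠ 0) :
    ‖mAdd c (-x) w‖^2 = ‖x - w‖^2 / (1 - 2*c*⟪x,w⟫ + c^2*‖x‖^2*‖w‖^2) := by
  have hD : 1 + 2*c*⟪-x,w⟫ + c^2*‖-x‖^2*‖w‖^2 ≠ 0 := by
    rw [inner_neg_left, norm_neg]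
    intro h; apply hQ; linarith [h]
  have h := normsq_mAdd hD
  rw [inner_neg_left, norm_neg] at h
  rw [h, neg_add_eq_sub, norm_sub_rev]
  congr 1
  ring

lemma ball_neg {c : ℝ} {x : E} (hx : c * ‖x‖^2 < 1) : c * ‖(-x : E)‖^2 < 1 := by
  rwa [norm_neg]

lemma norm_mAdd_invariant {c : ℝ} (hc : 0 < c) {p u v : E}
    (hp : c * ‖p‖^2 < 1) (hu : c * ‖u‖^2 < 1) (hv : c * ‖v‖^2 < 1) :
    ‖mAdd c (-(mAdd c p u)) (mAdd c p v)‖ = ‖mAdd c (-u) v‖ := by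
  have hD1 := D_pos hc hp hu
  have hD2 := D_pos hc hp hv
  have hbu := mAdd_mem_ball hc hp hu
  have hbv := mAdd_mem_ball hc hp hv
  have hQt := Q_pos hc hbu hbv
  have hQ := Q_pos hc hu hv
  have e1 := normsq_mAdd_neg (x := mAdd c p u) (w := mAdd c p v) hQt.ne'
  have e2 := normsq_mAdd_neg (x := u) (w := v) hQ.ne'
  have hM4 := normsq_sub_mAdd hD1.ne' hD2.ne'
  have hN : ‖mAdd c p u - mAdd c p v‖^2
      = (1 - c*‖p‖^2)^2 * ‖u - v‖^2 / ((1 + 2*c*⟪p,u⟫ + c^2*‖p‖^2*‖u‖^2)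
        * (1 + 2*c*⟪p,v⟫ + c^2*‖p‖^2*‖v‖^2)) := by
    rw [eq_div_iff (mul_ne_zero hD1.ne' hD2.ne')]
    exact hM4
  have hLTu := one_sub_normsq_mAdd (c := c) (x := p) (y := u) hD1.ne'
  have hLTv := one_sub_normsq_mAdd (c := c) (x := p) (y := v) hD2.ne'
  have hQtid : 1 - 2*c*⟪mAdd c p u, mAdd c p v⟫ + c^2*‖mAdd c p u‖^2*‖mAdd c p v‖^2
      = (1 - c*‖mAdd c p u‖^2)*(1 - c*‖mAdd c p v‖^2) + c*‖mAdd c p u - mAdd c p v‖^2 := by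
    rw [norm_sub_sq_real]; ring
  have hQid : 1 - 2*c*⟪u,v⟫ + c^2*‖u‖^2*‖v‖^2
      = (1 - c*‖u‖^2)*(1 - c*‖v‖^2) + c*‖u - v‖^2 := by
    rw [norm_sub_sq_real]; ring
  rw [hQtid, hLTu, hLTv, hN] at hQt
  rw [hQid] at hQ
  rw [← Real.sqrt_sq (norm_nonneg (mAdd c (-(mAdd c p u)) (mAdd c p v))),
    ← Real.sqrt_sq (norm_nonneg (mAdd c (-u) v)), e1, e2]
  congr 1
  rw [hQtid, hLTu, hLTv, hN, hQid, div_eq_div_iff hQt.ne' hQ.ne']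
  have hLp : (1:ℝ) - c*‖p‖^2 ≠ 0 := by intro h; nlinarith
  revert hD1 hD2
  generalize ⟪p,u⟫ = s1
  generalize ⟪p,v⟫ = s2
  generalize h1 : ‖u - v‖^2 = A
  generalize ‖p‖^2 = P
  generalize ‖u‖^2 = U
  generalize ‖v‖^2 = V
  intro hD1 hD2
  field_simp

lemma mDist_invariant {c : ℝ} (hc : 0 < c) {p u v : E}
    (hp : c * ‖p‖^2 < 1) (hu : c * ‖u‖^2 < 1) (hv : c * ‖v‖^2 < 1) :
    mDist c (mAdd c p u) (mAdd c p v) = mDist c u v := by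
  rw [mDist, mDist, norm_mAdd_invariant hc hp hu hv]

end Aux3

section Aux4
variable {n : ℕ}
local notation "E" => EuclideanSpace ℝ (Fin n)

set_option maxHeartbeats 1000000

lemma sqrtc_mul_norm_lt_one {c : ℝ} (hc : 0 < c) {m : E} (hm : c * ‖m‖^2 < 1) :
    Real.sqrt c * ‖m‖ < 1 := by
  have ht2 : (Real.sqrt c * ‖m‖)^2 = c * ‖m‖^2 := by rw [mul_pow, Real.sq_sqrt hc.le]
  have hr0 : 0 ≤ Real.sqrt c * ‖m‖ := by positivity
  nlinarith [sq_nonneg (Real.sqrt c * ‖m‖ - 1)]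

lemma sinh_mDist {c : ℝ} (hc : 0 < c) {y w : E} (hy : c*‖y‖^2 < 1) (hw : c*‖w‖^2 < 1) :
    Real.sinh (Real.sqrt c * mDist c y w)
      = 2*Real.sqrt c*‖mAdd c (-y) w‖*(1 - 2*c*⟪y,w⟫ + c^2*‖y‖^2*‖w‖^2)
        /((1 - c*‖y‖^2)*(1 - c*‖w‖^2)) := by
  have hsc : 0 < Real.sqrt c := Real.sqrt_pos.2 hc
  have hQ := Q_pos hc hy hw
  have hmb : c*‖mAdd c (-y) w‖^2 < 1 := mAdd_mem_ball hc (ball_neg hy) hw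
  have hr0 : 0 ≤ Real.sqrt c * ‖mAdd c (-y) w‖ := by positivity
  have hr1 := sqrtc_mul_norm_lt_one hc hmb
  have h2 : Real.sqrt c * mDist c y w = 2 * _root_.artanh (Real.sqrt c * ‖mAdd c (-y) w‖) := by
    rw [mDist]
    field_simp
  rw [h2, sinh_two_artanh hr0 hr1]
  have hr2 : (Real.sqrt c * ‖mAdd c (-y) w‖)^2 = c*‖mAdd c (-y) w‖^2 := by
    rw [mul_pow, Real.sq_sqrt hc.le]
  have hD : 1 + 2*c*⟪(-y : E),w⟫ + c^2*‖(-y : E)‖^2*‖w‖^2 ≠ 0 := by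
    rw [inner_neg_left, norm_neg]
    intro h; exact absurd (by linarith [h] :
      (1:ℝ) - 2*c*⟪y,w⟫ + c^2*‖y‖^2*‖w‖^2 = 0) hQ.ne'
  have hL : 1 - c*‖mAdd c (-y) w‖^2
      = (1 - c*‖y‖^2)*(1 - c*‖w‖^2)/(1 - 2*c*⟪y,w⟫ + c^2*‖y‖^2*‖w‖^2) := by
    have h := one_sub_normsq_mAdd hD
    rw [inner_neg_left, norm_neg] at h
    rw [h]
    congr 1
    ring
  rw [hr2, hL, div_div_eq_mul_div]
  ring

lemma normsq_combo3 (α β γ : ℝ) (p u v : E) :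
    ‖α•p + β•u + γ•v‖^2 = α^2*‖p‖^2 + β^2*‖u‖^2 + γ^2*‖v‖^2
      + 2*α*β*⟪p,u⟫ + 2*α*γ*⟪p,v⟫ + 2*β*γ*⟪u,v⟫ := by
  simp only [← real_inner_self_eq_norm_sq, inner_add_left, inner_add_right,
    real_inner_smul_left, real_inner_smul_right]
  rw [real_inner_comm u p, real_inner_comm v p, real_inner_comm v u]; ring

lemma core_ineq {c : ℝ} (hc : 0 < c) {y u a : E} (hy : c*‖y‖^2 < 1) (hu : c*‖u‖^2 < 1)
    (hua : ⟪u,a⟫ = 0) :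
    ⟪y,a⟫^2 * (1 - c*‖u‖^2)^2
      ≤ ‖y - u‖^2 * (1 - 2*c*⟪y,u⟫ + c^2*‖y‖^2*‖u‖^2) * ‖a‖^2 := by
  by_cases ha0 : a = 0
  · simp [ha0]
  by_cases hu0 : u = 0
  · subst hu0
    have hCS := abs_real_inner_le_norm y a
    rw [inner_zero_right, norm_zero, sub_zero]
    nlinarith [abs_nonneg (⟪y,a⟫), sq_abs (⟪y,a⟫), norm_nonneg y, norm_nonneg a,
      sq_nonneg (‖y‖*‖a‖ - |⟪y,a⟫|)]
  · have hA : (0:ℝ) < ‖a‖^2 := by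
      have := norm_pos_iff.mpr ha0
      positivity
    have hU : (0:ℝ) < ‖u‖^2 := by
      have := norm_pos_iff.mpr hu0
      positivity
    have hau : ⟪a,u⟫ = 0 := by rw [real_inner_comm]; exact hua
    have hw0 : (0:ℝ) ≤ ‖(‖a‖^2*‖u‖^2) • (y-u) + (-(⟪y-u,a⟫*‖u‖^2)) • a
        + (-(⟪y-u,u⟫*‖a‖^2)) • u‖^2 := sq_nonneg _
    rw [normsq_combo3, hau] at hw0
    have hB2 : 0 ≤ (‖a‖^2*‖u‖^2) * (‖y-u‖^2*‖a‖^2*‖u‖^2 - ⟪y-u,a⟫^2*‖u‖^2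
        - ⟪y-u,u⟫^2*‖a‖^2) := by nlinarith [hw0]
    have hB : ⟪y-u,a⟫^2*‖u‖^2 + ⟪y-u,u⟫^2*‖a‖^2 ≤ ‖y-u‖^2*‖a‖^2*‖u‖^2 := by
      have h3 := div_nonneg hB2 (mul_pos hA hU).le
      rw [mul_div_cancel_left₀ _ (mul_pos hA hU).ne'] at h3
      linarith
    have hea : ⟪y-u,a⟫ = ⟪y,a⟫ := by simp [inner_sub_left, hua]
    have heu : ⟪y-u,u⟫ = ⟪y,u⟫ - ‖u‖^2 := by
      rw [inner_sub_left, real_inner_self_eq_norm_sq]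
    rw [hea, heu] at hB
    have hd : ‖y-u‖^2 = ‖y‖^2 - 2*⟪y,u⟫ + ‖u‖^2 := by
      rw [norm_sub_sq_real]; try ring
    rw [hd] at hB ⊢
    have key : ⟪y,a⟫^2 * (1 - c*‖u‖^2)^2 * ‖u‖^2
        ≤ (‖y‖^2 - 2*⟪y,u⟫ + ‖u‖^2) * (1 - 2*c*⟪y,u⟫ + c^2*‖y‖^2*‖u‖^2) * ‖a‖^2 * ‖u‖^2 := by
      nlinarith [mul_nonneg (sq_nonneg (1 - c*‖u‖^2)) (sub_nonneg.2 hB),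
        mul_nonneg hA.le
          (sq_nonneg ((1+c*‖u‖^2)*(⟪y,u⟫-‖u‖^2) - c*‖u‖^2*(‖y‖^2-‖u‖^2)))]
    exact le_of_mul_le_mul_right key hU
end Aux4

section Aux5
variable {n : ℕ}
local notation "E" => EuclideanSpace ℝ (Fin n)

set_option maxHeartbeats 1000000

private lemma kdiv : ∀ d q A : ℝ, q ≠ 0 → d/q*q^2*A = d*q*A := by
  intro d q A h; field_simp

private lemma k1 : ∀ S A Y : ℝ, A ≠ 0 → Y - 2*(S/A*S) + (S/A)^2*A = Y - S^2/A := by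
  intro S A Y h; field_simp; try ring

private lemma k2 : ∀ S A Y : ℝ, A ≠ 0 → Y - S/A*S = Y - S^2/A := by
  intro S A Y h; field_simp; try ring

private lemma k3 : ∀ S A Y : ℝ, A ≠ 0 → S^2 = (Y - (Y - S^2/A))*A := by
  intro S A Y h; field_simp; try ring

lemma dist_lower {c : ℝ} (hc : 0 < c) {y u a : E} (hy : c*‖y‖^2 < 1) (hu : c*‖u‖^2 < 1)
    (ha : a ≠ 0) (hua : ⟪u,a⟫ = 0) :
    (1/Real.sqrt c) * Real.arsinh (2*Real.sqrt c * |⟪y,a⟫| / ((1 - c*‖y‖^2)*‖a‖))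
      ≤ mDist c y u := by
  have hsc : 0 < Real.sqrt c := Real.sqrt_pos.2 hc
  have hQ := Q_pos hc hy hu
  have hLy : (0:ℝ) < 1 - c*‖y‖^2 := by linarith
  have hLu : (0:ℝ) < 1 - c*‖u‖^2 := by linarith
  have hna : (0:ℝ) < ‖a‖ := norm_pos_iff.mpr ha
  have hCI := core_ineq hc hy hu hua
  have hm2 : ‖mAdd c (-y) u‖^2 = ‖y-u‖^2/(1-2*c*⟪y,u⟫+c^2*‖y‖^2*‖u‖^2) :=
    normsq_mAdd_neg hQ.ne'
  have hTsq : (|⟪y,a⟫| * (1 - c*‖u‖^2))^2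
      ≤ (‖mAdd c (-y) u‖ * (1-2*c*⟪y,u⟫+c^2*‖y‖^2*‖u‖^2) * ‖a‖)^2 := by
    rw [mul_pow, mul_pow, mul_pow, sq_abs, hm2, kdiv _ _ _ hQ.ne']
    exact hCI
  have hT : |⟪y,a⟫| * (1 - c*‖u‖^2)
      ≤ ‖mAdd c (-y) u‖ * (1-2*c*⟪y,u⟫+c^2*‖y‖^2*‖u‖^2) * ‖a‖ := by
    have h1 : 0 ≤ |⟪y,a⟫| * (1 - c*‖u‖^2) := mul_nonneg (abs_nonneg _) hLu.le
    have h2 : 0 ≤ ‖mAdd c (-y) u‖ * (1-2*c*⟪y,u⟫+c^2*‖y‖^2*‖u‖^2) * ‖a‖ := by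
      have := norm_nonneg (mAdd c (-y) u)
      positivity
    have h3 := Real.sqrt_le_sqrt hTsq
    rwa [Real.sqrt_sq h1, Real.sqrt_sq h2] at h3
  rw [show mDist c y u = (1/Real.sqrt c) * (Real.sqrt c * mDist c y u) by
    field_simp]
  apply mul_le_mul_of_nonneg_left _ (by positivity)
  rw [← Real.sinh_le_sinh, Real.sinh_arsinh, sinh_mDist hc hy hu]
  rw [div_le_div_iff₀ (by positivity) (by positivity)]
  nlinarith [mul_le_mul_of_nonneg_left hT
    (by positivity : (0:ℝ) ≤ 2*Real.sqrt c*(1-c*‖y‖^2))]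

lemma exists_min {c : ℝ} (hc : 0 < c) {y a : E} (hy : c*‖y‖^2 < 1) (ha : a ≠ 0) :
    ∃ u : E, c*‖u‖^2 < 1 ∧ ⟪u,a⟫ = 0 ∧
      mDist c y u
        = (1/Real.sqrt c) * Real.arsinh (2*Real.sqrt c * |⟪y,a⟫| /((1 - c*‖y‖^2)*‖a‖)) := by
  have hsc : 0 < Real.sqrt c := Real.sqrt_pos.2 hc
  have hna : (0:ℝ) < ‖a‖ := norm_pos_iff.mpr ha
  have hA : (0:ℝ) < ‖a‖^2 := by positivity
  have hLy : (0:ℝ) < 1 - c*‖y‖^2 := by linarith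
  set z : E := y - (⟪y,a⟫/‖a‖^2) • a with hzdef
  set G : ℝ := 1 + c*‖y‖^2 with hGdef
  set R : ℝ := Real.sqrt (G^2 - 4*c*‖z‖^2) with hRdef
  set μ : ℝ := 2/(G+R) with hmudef
  have hza : ⟪z,a⟫ = 0 := by
    rw [hzdef, inner_sub_left, real_inner_smul_left, real_inner_self_eq_norm_sq]
    field_simp
    ring
  have hsmulnorm : ‖(⟪y,a⟫/‖a‖^2) • a‖^2 = (⟪y,a⟫/‖a‖^2)^2*‖a‖^2 := by
    rw [norm_smul, mul_pow, Real.norm_eq_abs, sq_abs]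
  have hz2 : ‖z‖^2 = ‖y‖^2 - ⟪y,a⟫^2/‖a‖^2 := by
    rw [hzdef, norm_sub_sq_real, hsmulnorm, real_inner_smul_right]
    exact k1 ⟪y,a⟫ (‖a‖^2) (‖y‖^2) hA.ne'
  have hyz : ⟪y,z⟫ = ‖z‖^2 := by
    rw [hzdef, inner_sub_right, real_inner_smul_right, real_inner_self_eq_norm_sq, hz2]
    exact k2 ⟪y,a⟫ (‖a‖^2) (‖y‖^2) hA.ne'
  have hz0 : (0:ℝ) ≤ ‖z‖^2 := sq_nonneg _
  have hSA : (0:ℝ) ≤ ⟪y,a⟫^2/‖a‖^2 := by positivity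
  have hzY : ‖z‖^2 ≤ ‖y‖^2 := by rw [hz2]; linarith
  have hcz : c*‖z‖^2 < 1 := by nlinarith
  have hGpos : (0:ℝ) < G := by rw [hGdef]; positivity
  have hR2pos : (0:ℝ) < G^2 - 4*c*‖z‖^2 := by
    rw [hGdef]
    nlinarith [sq_nonneg (1 - c*‖z‖^2), mul_le_mul_of_nonneg_left hzY hc.le]
  have hRpos : (0:ℝ) < R := by rw [hRdef]; exact Real.sqrt_pos.2 hR2pos
  have hR2 : R^2 = G^2 - 4*c*‖z‖^2 := by rw [hRdef]; exact Real.sq_sqrt hR2pos.le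
  have hGR : (0:ℝ) < G + R := by linarith
  have hmu : c*‖z‖^2*μ^2 = G*μ - 1 := by
    rw [hmudef]
    field_simp
    linear_combination hR2
  have hmupos : 0 < μ := by rw [hmudef]; positivity
  have hu2 : ‖μ • z‖^2 = μ^2*‖z‖^2 := by
    rw [norm_smul, mul_pow, Real.norm_eq_abs, sq_abs]
  have hball : c*‖μ • z‖^2 < 1 := by
    rw [hu2]
    have hmult : μ < 2/G := by
      rw [hmudef]
      exact div_lt_div_of_pos_left (by norm_num) hGpos (by linarith)
    have hG2 : G*μ < 2 := by
      have := (lt_div_iff₀ hGpos).mp hmult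
      linarith
    nlinarith [hmu]
  have hua : ⟪μ • z, a⟫ = 0 := by rw [real_inner_smul_left, hza, mul_zero]
  refine ⟨μ • z, hball, hua, ?_⟩
  have hyu : ⟪y, μ • z⟫ = μ*‖z‖^2 := by rw [real_inner_smul_right, hyz]
  have hd : ‖y - μ • z‖^2 = ‖y‖^2 - 2*μ*‖z‖^2 + μ^2*‖z‖^2 := by
    rw [norm_sub_sq_real, real_inner_smul_right, hyz, hu2]
    ring
  have hS2 : ⟪y,a⟫^2 = (‖y‖^2 - ‖z‖^2)*‖a‖^2 := by
    rw [hz2]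
    exact k3 ⟪y,a⟫ (‖a‖^2) (‖y‖^2) hA.ne'
  have hQu := Q_pos hc hy hball
  have hLu : (0:ℝ) < 1 - c*‖μ • z‖^2 := by linarith
  rw [hGdef] at hmu
  have hE2 : ‖y - μ • z‖^2*(1-2*c*⟪y,μ • z⟫+c^2*‖y‖^2*‖μ • z‖^2)*‖a‖^2
      = ⟪y,a⟫^2*(1-c*‖μ • z‖^2)^2 := by
    rw [hd, hyu, hu2, hS2]
    linear_combination (‖a‖^2*‖z‖^2*(c*‖z‖^2*μ^2 - (1+c*‖y‖^2)*μ + 1)) * hmu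
  have hm2 : ‖mAdd c (-y) (μ • z)‖^2
      = ‖y - μ • z‖^2/(1-2*c*⟪y,μ • z⟫+c^2*‖y‖^2*‖μ • z‖^2) := normsq_mAdd_neg hQu.ne'
  have hTeq : ‖mAdd c (-y) (μ • z)‖*(1-2*c*⟪y,μ • z⟫+c^2*‖y‖^2*‖μ • z‖^2)*‖a‖
      = |⟪y,a⟫| * (1-c*‖μ • z‖^2) := by
    have h1 : 0 ≤ ‖mAdd c (-y) (μ • z)‖*(1-2*c*⟪y,μ • z⟫+c^2*‖y‖^2*‖μ • z‖^2)*‖a‖ := by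
      have := norm_nonneg (mAdd c (-y) (μ • z))
      positivity
    have h2 : 0 ≤ |⟪y,a⟫| * (1-c*‖μ • z‖^2) := mul_nonneg (abs_nonneg _) hLu.le
    have hsq : (‖mAdd c (-y) (μ • z)‖*(1-2*c*⟪y,μ • z⟫+c^2*‖y‖^2*‖μ • z‖^2)*‖a‖)^2
        = (|⟪y,a⟫| * (1-c*‖μ • z‖^2))^2 := by
      rw [mul_pow, mul_pow, mul_pow, sq_abs, hm2, kdiv _ _ _ hQu.ne', hE2]
    calc ‖mAdd c (-y) (μ • z)‖*(1-2*c*⟪y,μ • z⟫+c^2*‖y‖^2*‖μ • z‖^2)*‖a‖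
        = Real.sqrt ((‖mAdd c (-y) (μ • z)‖*(1-2*c*⟪y,μ • z⟫+c^2*‖y‖^2*‖μ • z‖^2)*‖a‖)^2) :=
          (Real.sqrt_sq h1).symm
      _ = Real.sqrt ((|⟪y,a⟫| * (1-c*‖μ • z‖^2))^2) := by rw [hsq]
      _ = |⟪y,a⟫| * (1-c*‖μ • z‖^2) := Real.sqrt_sq h2
  have hsinh : Real.sinh (Real.sqrt c * mDist c y (μ • z))
      = 2*Real.sqrt c * |⟪y,a⟫| / ((1 - c*‖y‖^2)*‖a‖) := by
    rw [sinh_mDist hc hy hball, div_eq_div_iff (by positivity) (by positivity)]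
    linear_combination (2*Real.sqrt c*(1 - c*‖y‖^2)) * hTeq
  have harc := Real.sinh_injective (hsinh.trans (Real.sinh_arsinh _).symm)
  rw [← harc]
  field_simp

end Aux5

theorem dist_to_poincare_hyperplane {n : ℕ} (c : ℝ) (hc : 0 < c)
    (x : EuclideanSpace ℝ (Fin n)) (hx : c * ‖x‖ ^ 2 < 1)
    (p : EuclideanSpace ℝ (Fin n)) (hp : c * ‖p‖ ^ 2 < 1)
    (a : EuclideanSpace ℝ (Fin n)) (ha : a ≠ 0) :
    sInf (mDist c x ''
        {w : EuclideanSpace ℝ (Fin n) | c * ‖w‖ ^ 2 < 1 ∧ ⟪mAdd c (-p) w, a⟫ = 0}) =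
      (1 / Real.sqrt c) * Real.arsinh
        (2 * Real.sqrt c * |⟪mAdd c (-p) x, a⟫| /
          ((1 - c * ‖mAdd c (-p) x‖ ^ 2) * ‖a‖)) := by
  have hpn : c * ‖(-p : EuclideanSpace ℝ (Fin n))‖^2 < 1 := ball_neg hp
  have hby : c * ‖mAdd c (-p) x‖^2 < 1 := mAdd_mem_ball hc hpn hx
  have hxy : mAdd c p (mAdd c (-p) x) = x := mAdd_cancel_s17 hc hp hx
  have himg : mDist c x ''
        {w : EuclideanSpace ℝ (Fin n) | c * ‖w‖ ^ 2 < 1 ∧ ⟪mAdd c (-p) w, a⟫ = 0}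
      = mDist c (mAdd c (-p) x) ''
        {u : EuclideanSpace ℝ (Fin n) | c * ‖u‖ ^ 2 < 1 ∧ ⟪u, a⟫ = 0} := by
    apply Set.Subset.antisymm
    · rintro t ⟨w, ⟨hwb, hwa⟩, rfl⟩
      refine ⟨mAdd c (-p) w, ⟨mAdd_mem_ball hc hpn hwb, hwa⟩, ?_⟩
      have hw' : mAdd c p (mAdd c (-p) w) = w := mAdd_cancel_s17 hc hp hwb
      have h := mDist_invariant hc hp hby (mAdd_mem_ball hc hpn hwb)
      rw [hxy, hw'] at h
      exact h.symm
    · rintro t ⟨u, ⟨hub, hua⟩, rfl⟩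
      refine ⟨mAdd c p u, ⟨mAdd_mem_ball hc hp hub, ?_⟩, ?_⟩
      · rw [mAdd_neg_cancel hc hp hub]
        exact hua
      · have h := mDist_invariant hc hp hby hub
        rw [hxy] at h
        exact h
  rw [himg]
  apply IsLeast.csInf_eq
  constructor
  · obtain ⟨u, h1, h2, h3⟩ := exists_min hc hby ha
    exact ⟨u, ⟨h1, h2⟩, h3⟩
  · rintro t ⟨u, ⟨hub, hua⟩, rfl⟩
    exact dist_lower hc hby hub ha hua
end
end
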